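/- For every fixed positive integer m, the densities of the generalized Simons cones converge to the entropy of the round m-sphere: lim_{l→∞} D(m,l) = E(m), where D(m,l) = (σ_m·σ_l/σ_{m+l})·(m/(m+l))^{m/2}·(l/(m+l))^{l/2} and E(m) = 2√π·(m/(2e))^{m/2}/Γ((m+1)/2). -/

import Mathlib

open Real Filter

lemma wendel_upper {x θ : ℝ} (hx : 0 < x) (hθ0 : 0 < θ) (hθ1 : θ < 1) :
    Gamma (x + θ) ≤ Gamma x * x ^ θ := by
  have key := Real.Gamma_mul_add_mul_le_rpow_Gamma_mul_rpow_Gamma hx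
    (by linarith : (0:ℝ) < x + 1) (by linarith : (0:ℝ) < 1 - θ) hθ0 (by ring)
  have h1 : (1 - θ) * x + θ * (x + 1) = x + θ := by ring
  rw [h1, Real.Gamma_add_one hx.ne'] at key
  calc Gamma (x + θ) ≤ Gamma x ^ (1 - θ) * (x * Gamma x) ^ θ := key
    _ = Gamma x * x ^ θ := by
        rw [Real.mul_rpow hx.le (Real.Gamma_pos_of_pos hx).le,
          ← mul_assoc, mul_comm (Gamma x ^ (1-θ)), mul_assoc,
          ← Real.rpow_add (Real.Gamma_pos_of_pos hx)]
        ring_nf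
        rw [Real.rpow_one]

lemma wendel_lower {x θ : ℝ} (hx : 0 < x) (hθ0 : 0 < θ) (hθ1 : θ < 1) :
    x * Gamma x ≤ Gamma (x + θ) * (x + θ) ^ (1 - θ) := by
  have hxθ : (0:ℝ) < x + θ := by linarith
  have key := Real.Gamma_mul_add_mul_le_rpow_Gamma_mul_rpow_Gamma hxθ
    (by linarith : (0:ℝ) < x + θ + 1) hθ0 (by linarith : (0:ℝ) < 1 - θ) (by ring)
  have h1 : θ * (x + θ) + (1 - θ) * (x + θ + 1) = x + 1 := by ring
  rw [h1, Real.Gamma_add_one hxθ.ne', Real.Gamma_add_one hx.ne'] at key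
  calc x * Gamma x ≤ Gamma (x+θ) ^ θ * ((x+θ) * Gamma (x+θ)) ^ (1-θ) := key
    _ = Gamma (x + θ) * (x + θ) ^ (1 - θ) := by
        rw [Real.mul_rpow hxθ.le (Real.Gamma_pos_of_pos hxθ).le,
          ← mul_assoc, mul_comm _ ((x+θ) ^ (1-θ)), mul_assoc,
          ← Real.rpow_add (Real.Gamma_pos_of_pos hxθ)]
        ring_nf
        rw [Real.rpow_one]

lemma tendsto_gamma_ratio_frac {θ : ℝ} (h0 : 0 ≤ θ) (h1 : θ < 1) :
    Tendsto (fun x : ℝ => Gamma (x + θ) / (Gamma x * x ^ θ)) atTop (nhds 1) := by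
  rcases h0.eq_or_lt with rfl | hθ
  · refine tendsto_const_nhds.congr' ?_
    filter_upwards [eventually_gt_atTop (0:ℝ)] with x hx
    rw [add_zero, Real.rpow_zero, mul_one, div_self (Real.Gamma_pos_of_pos hx).ne']
  · -- squeeze between (x/(x+θ))^(1-θ) and 1
    have hL : Tendsto (fun x : ℝ => (x / (x + θ)) ^ (1 - θ)) atTop (nhds 1) := by
      have hbase : Tendsto (fun x : ℝ => x / (x + θ)) atTop (nhds 1) := by
        have h2 : Tendsto (fun x : ℝ => 1 - θ / (x + θ)) atTop (nhds 1) := by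
          have := (tendsto_inv_atTop_zero.comp (tendsto_atTop_add_const_right atTop θ
            tendsto_id)).const_mul θ
          simpa [div_eq_mul_inv] using (tendsto_const_nhds.sub this)
        refine h2.congr' ?_
        filter_upwards [eventually_gt_atTop (0:ℝ)] with x hx
        field_simp
        ring
      have := ((Real.continuousAt_rpow_const 1 (1 - θ) (Or.inl one_ne_zero)).tendsto).comp hbase
      simpa [Function.comp_def] using this
    refine tendsto_of_tendsto_of_tendsto_of_le_of_le' hL tendsto_const_nhds ?_ ?_
    · filter_upwards [eventually_gt_atTop (0:ℝ)] with x hx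
      have hxθ : (0:ℝ) < x + θ := by linarith
      have hG := Real.Gamma_pos_of_pos hx
      have hGθ := Real.Gamma_pos_of_pos hxθ
      rw [le_div_iff₀ (by positivity)]
      have key := wendel_lower hx hθ h1
      -- (x/(x+θ))^(1-θ) * (Gamma x * x^θ) ≤ Gamma (x+θ)
      rw [Real.div_rpow hx.le hxθ.le]
      rw [div_mul_eq_mul_div, div_le_iff₀ (by positivity)]
      calc x ^ (1-θ) * (Gamma x * x ^ θ) = (x * Gamma x) * 1 := by
            rw [mul_comm (Gamma x), ← mul_assoc, ← Real.rpow_add hx]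
            ring_nf
            rw [Real.rpow_one]
            ring
        _ ≤ (Gamma (x+θ) * (x+θ) ^ (1-θ)) * 1 := by
            rw [mul_one, mul_one]; exact key
        _ = Gamma (x + θ) * (x + θ) ^ (1 - θ) := by ring
    · filter_upwards [eventually_gt_atTop (0:ℝ)] with x hx
      have hG := Real.Gamma_pos_of_pos hx
      rw [div_le_one (by positivity)]
      exact wendel_upper hx hθ h1

lemma tendsto_gamma_ratio {a : ℝ} (ha : 0 ≤ a) :
    Tendsto (fun x : ℝ => Gamma (x + a) / (Gamma x * x ^ a)) atTop (nhds 1) := by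
  have aux : ∀ n : ℕ, ∀ θ : ℝ, 0 ≤ θ → θ < 1 →
      Tendsto (fun x : ℝ => Gamma (x + (n + θ)) / (Gamma x * x ^ ((n:ℝ) + θ))) atTop (nhds 1) := by
    intro n
    induction n with
    | zero => intro θ h0 h1; simpa using tendsto_gamma_ratio_frac h0 h1
    | succ n ih =>
      intro θ h0 h1
      have hfrac : Tendsto (fun x : ℝ => ((x + ((n:ℝ) + θ)) / x)) atTop (nhds 1) := by
        have h2 : Tendsto (fun x : ℝ => 1 + ((n:ℝ) + θ) * x⁻¹) atTop (nhds 1) := by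
          simpa using (tendsto_const_nhds (x := (1:ℝ))).add
            (tendsto_inv_atTop_zero.const_mul ((n:ℝ) + θ))
        refine h2.congr' ?_
        filter_upwards [eventually_gt_atTop (0:ℝ)] with x hx
        field_simp
      have := (ih θ h0 h1).mul hfrac
      rw [mul_one] at this
      refine this.congr' ?_
      filter_upwards [eventually_gt_atTop (0:ℝ)] with x hx
      have hG := Real.Gamma_pos_of_pos hx
      have harg : (0:ℝ) < x + ((n:ℝ) + θ) := by positivity
      have hΓ : Gamma (x + (((n:ℝ) + 1) + θ)) = (x + ((n:ℝ) + θ)) * Gamma (x + ((n:ℝ) + θ)) := by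
        rw [show x + (((n:ℝ) + 1) + θ) = (x + ((n:ℝ) + θ)) + 1 by ring,
          Real.Gamma_add_one harg.ne']
      have hpow : x ^ (((n:ℝ) + 1) + θ) = x ^ ((n:ℝ) + θ) * x := by
        rw [show ((n:ℝ) + 1) + θ = ((n:ℝ) + θ) + 1 by ring, Real.rpow_add hx, Real.rpow_one]
      push_cast
      push_cast at hΓ hpow
      rw [hΓ, hpow]
      field_simp
  obtain ⟨n, θ, hθ0, hθ1, rfl⟩ : ∃ (n : ℕ) (θ : ℝ), 0 ≤ θ ∧ θ < 1 ∧ a = n + θ := by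
    refine ⟨⌊a⌋₊, a - ⌊a⌋₊, by simpa using Nat.floor_le ha, ?_, by ring⟩
    have := Nat.lt_floor_add_one a
    linarith
  exact aux _ _ hθ0 hθ1



/-- `σ_n`, the area of the unit sphere `S^n ⊆ ℝ^{n+1}`. -/
noncomputable def sphereArea (n : ℕ) : ℝ :=
  ((n : ℝ) + 1) * Real.pi ^ (((n : ℝ) + 1) / 2) / Real.Gamma (((n : ℝ) + 3) / 2)

/-- `D(m,l)`, the density at the vertex of the generalized Simons cone `C_{m,l}`. -/
noncomputable def simonsDensity (m l : ℕ) : ℝ :=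
  (sphereArea m * sphereArea l / sphereArea (m + l)) *
    ((m : ℝ) / ((m : ℝ) + (l : ℝ))) ^ ((m : ℝ) / 2) *
    ((l : ℝ) / ((m : ℝ) + (l : ℝ))) ^ ((l : ℝ) / 2)

/-- Stone's formula for the entropy of the round `n`-sphere (with `0 ^ 0 = 1`). -/
noncomputable def sphereEntropy (n : ℕ) : ℝ :=
  2 * Real.sqrt Real.pi * ((n : ℝ) / (2 * Real.exp 1)) ^ ((n : ℝ) / 2) /
    Real.Gamma (((n : ℝ) + 1) / 2)

lemma sphereArea_eq (n : ℕ) :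
    sphereArea n = 2 * Real.pi ^ (((n : ℝ) + 1) / 2) / Real.Gamma (((n : ℝ) + 1) / 2) := by
  have h1 : (0:ℝ) < ((n:ℝ) + 1) / 2 := by positivity
  have h2 : (((n:ℝ)) + 3)/2 = ((n:ℝ) + 1)/2 + 1 := by ring
  rw [sphereArea, h2, Real.Gamma_add_one h1.ne']
  have hG := Real.Gamma_pos_of_pos h1
  field_simp

theorem simonsDensity_tendsto_sphereEntropy (m : ℕ) (hm : 1 ≤ m) :
    Filter.Tendsto (fun l : ℕ => simonsDensity m l) Filter.atTop (nhds (sphereEntropy m)) := by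
  have hm0 : (0:ℝ) < (m:ℝ) := by exact_mod_cast hm
  set p : ℝ := (m:ℝ)/2 with hp
  have hp0 : 0 < p := by positivity
  set C : ℝ := 2 * Real.sqrt Real.pi * ((m:ℝ)/2) ^ p / Gamma (((m:ℝ)+1)/2) with hC
  -- limit components
  have hxl : Tendsto (fun l : ℕ => ((l:ℝ) + 1)/2) atTop atTop := by
    apply Tendsto.atTop_div_const (by norm_num : (0:ℝ) < 2)
    exact tendsto_atTop_add_const_right _ _ tendsto_natCast_atTop_atTop
  have hg : Tendsto (fun l : ℕ =>
      Gamma (((l:ℝ)+1)/2 + p) / (Gamma (((l:ℝ)+1)/2) * (((l:ℝ)+1)/2) ^ p)) atTop (nhds 1) :=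
    (tendsto_gamma_ratio hp0.le).comp hxl
  have hA : Tendsto (fun l : ℕ => (((l:ℝ)+1)/((m:ℝ)+(l:ℝ))) ^ p) atTop (nhds 1) := by
    have hbase : Tendsto (fun l : ℕ => ((l:ℝ)+1)/((m:ℝ)+(l:ℝ))) atTop (nhds 1) := by
      have h2 : Tendsto (fun x : ℝ => (x+1)/((m:ℝ)+x)) atTop (nhds 1) := by
        have h3 : Tendsto (fun x : ℝ => 1 + (1-(m:ℝ)) * ((m:ℝ)+x)⁻¹) atTop (nhds 1) := by
          simpa using (tendsto_const_nhds (x := (1:ℝ))).add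
            ((tendsto_inv_atTop_zero.comp
              (tendsto_atTop_add_const_left atTop (m:ℝ) tendsto_id)).const_mul (1-(m:ℝ)))
        refine h3.congr' ?_
        filter_upwards [eventually_gt_atTop (0:ℝ)] with x hx
        have : (m:ℝ) + x ≠ 0 := by positivity
        field_simp
        ring
      exact h2.comp tendsto_natCast_atTop_atTop
    have := ((Real.continuousAt_rpow_const 1 p (Or.inl one_ne_zero)).tendsto).comp hbase
    simpa [Function.comp_def] using this
  have hB : Tendsto (fun l : ℕ => ((l:ℝ)/((m:ℝ)+(l:ℝ))) ^ ((l:ℝ)/2)) atTop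
      (nhds (Real.exp (-p))) := by
    have hhalf : Tendsto (fun l : ℕ => (l:ℝ)/2) atTop atTop :=
      Tendsto.atTop_div_const (by norm_num) tendsto_natCast_atTop_atTop
    have h2 : Tendsto (fun l : ℕ => ((1 + p / ((l:ℝ)/2)) ^ ((l:ℝ)/2))⁻¹) atTop
        (nhds (Real.exp p)⁻¹) :=
      (((tendsto_one_add_div_rpow_exp p).comp hhalf)).inv₀ (Real.exp_ne_zero p)
    rw [← Real.exp_neg] at h2
    refine h2.congr' ?_
    filter_upwards [eventually_gt_atTop 0] with l hl
    have hl0 : (0:ℝ) < (l:ℝ) := by exact_mod_cast hl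
    have hb : (0:ℝ) < 1 + p / ((l:ℝ)/2) := by positivity
    have hbase : (l:ℝ)/((m:ℝ)+(l:ℝ)) = (1 + p/((l:ℝ)/2))⁻¹ := by
      rw [hp]
      have hml : (0:ℝ) < (m:ℝ) + (l:ℝ) := by positivity
      have hstep : 1 + (m:ℝ)/2/((l:ℝ)/2) = ((m:ℝ)+(l:ℝ))/(l:ℝ) := by
        field_simp
        ring
      rw [hstep, inv_div]
    rw [hbase, Real.inv_rpow hb.le]
  have hF : Tendsto (fun l : ℕ => C *
      (Gamma (((l:ℝ)+1)/2 + p) / (Gamma (((l:ℝ)+1)/2) * (((l:ℝ)+1)/2) ^ p)) *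
      ((((l:ℝ)+1)/((m:ℝ)+(l:ℝ))) ^ p) *
      (((l:ℝ)/((m:ℝ)+(l:ℝ))) ^ ((l:ℝ)/2))) atTop
      (nhds (C * 1 * 1 * Real.exp (-p))) :=
    ((tendsto_const_nhds.mul hg).mul hA).mul hB
  have hE : C * 1 * 1 * Real.exp (-p) = sphereEntropy m := by
    rw [hC, sphereEntropy, hp]
    have h1 : ((m:ℝ) / (2 * Real.exp 1)) = ((m:ℝ)/2) * (Real.exp 1)⁻¹ := by
      field_simp
    rw [h1, Real.mul_rpow (by positivity) (by positivity),
      Real.inv_rpow (Real.exp_pos 1).le, Real.exp_one_rpow, ← Real.exp_neg]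
    ring
  rw [← hE]
  refine hF.congr' ?_
  filter_upwards [eventually_ge_atTop 1] with l hl
  have hl0 : (0:ℝ) < (l:ℝ) := by exact_mod_cast hl
  have hml : (0:ℝ) < (m:ℝ) + (l:ℝ) := by positivity
  have hl1 : (0:ℝ) < ((l:ℝ)+1)/2 := by positivity
  have hm1 : (0:ℝ) < ((m:ℝ)+1)/2 := by positivity
  have hGm := Real.Gamma_pos_of_pos hm1
  have hGl := Real.Gamma_pos_of_pos hl1
  have hGml := Real.Gamma_pos_of_pos (show (0:ℝ) < ((m:ℝ)+(l:ℝ)+1)/2 by positivity)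
  -- unfold simonsDensity
  rw [simonsDensity, sphereArea_eq, sphereArea_eq, sphereArea_eq]
  push_cast
  -- pi powers
  have hpi : Real.pi ^ (((m:ℝ)+1)/2)
      = Real.sqrt Real.pi * Real.pi ^ (((m:ℝ)+(l:ℝ)+1)/2) / Real.pi ^ (((l:ℝ)+1)/2) := by
    rw [Real.sqrt_eq_rpow, ← Real.rpow_add Real.pi_pos, ← Real.rpow_sub Real.pi_pos]
    congr 1
    ring
  -- rpow splitting
  have hsplit : ((m:ℝ)/((m:ℝ)+(l:ℝ))) ^ p
      = ((m:ℝ)/2) ^ p * ((((l:ℝ)+1)/((m:ℝ)+(l:ℝ))) ^ p) * ((((l:ℝ)+1)/2) ^ p)⁻¹ := by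
    rw [← Real.inv_rpow hl1.le, ← Real.mul_rpow (by positivity) (by positivity),
      ← Real.mul_rpow (by positivity) (by positivity)]
    congr 1
    field_simp
  have hgamma : Gamma (((l:ℝ)+1)/2 + p) = Gamma (((m:ℝ)+(l:ℝ)+1)/2) := by
    rw [hp]
    congr 1
    ring
  rw [hsplit, hgamma, hC, hpi]
  have hP1 : (0:ℝ) < Real.pi ^ (((m:ℝ)+1)/2) := by positivity
  have hP2 : (0:ℝ) < Real.pi ^ (((l:ℝ)+1)/2) := by positivity
  have hP3 : (0:ℝ) < Real.pi ^ (((m:ℝ)+(l:ℝ)+1)/2) := by positivity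
  have hQ1 : (0:ℝ) < (((l:ℝ)+1)/2) ^ p := by positivity
  field_simp
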